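/- arXiv:2206.10854 — 3 statements merged into one kernel-verified Lean document; each statement's English description precedes it below -/
import Mathlib

section
/- Let P be a homogeneous polynomial of degree d in n variables with Δ²P = 0, and define P† = P - (ρ/(2d + n - 4))·ΔP where ρ = (1/2)Σ x_i², assuming 2d + n - 4 ≠ 0. Then P† is harmonic: ΔP† = 0. -/
open MvPolynomial

noncomputable section

/-- The Laplacian Δ = Σⱼ ∂ⱼ² on polynomials in n variables. -/
noncomputable def lapP {n : ℕ} (P : MvPolynomial (Fin n) ℂ) : MvPolynomial (Fin n) ℂ :=
  ∑ j : Fin n, pderiv j (pderiv j P)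

/-- ρ = (1/2) Σᵢ xᵢ² as a polynomial. -/
noncomputable def rhoP (n : ℕ) : MvPolynomial (Fin n) ℂ :=
  C (1 / 2) * ∑ i : Fin n, X i ^ 2

namespace DaggerAux

variable {n : ℕ}

lemma degree_eq_sum (s : Fin n →₀ ℕ) : s.degree = ∑ i, s i := by
  rw [Finsupp.degree]
  exact Finset.sum_subset (Finset.subset_univ _)
    (fun i _ hi => by simpa using Finsupp.notMem_support_iff.mp hi)

lemma X_mul_pderiv_monomial (i : Fin n) (s : Fin n →₀ ℕ) (a : ℂ) :
    X i * pderiv i (monomial s a) = (s i) • monomial s a := by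
  rw [pderiv_monomial]
  by_cases h : s i = 0
  · simp [h]
  · have hle : Finsupp.single i 1 ≤ s := by
      rw [Finsupp.single_le_iff]; omega
    rw [X, monomial_mul, add_tsub_cancel_of_le hle, smul_monomial]
    congr 1
    simp [mul_comm]

lemma euler {d : ℕ} {P : MvPolynomial (Fin n) ℂ} (h : P.IsHomogeneous d) :
    ∑ i : Fin n, X i * pderiv i P = d • P := by
  conv_lhs => rw [P.as_sum]
  conv_rhs => rw [P.as_sum]
  rw [Finset.smul_sum]
  simp only [map_sum, Finset.mul_sum]
  rw [Finset.sum_comm]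
  refine Finset.sum_congr rfl fun s hs => ?_
  simp only [X_mul_pderiv_monomial, ← Finset.sum_smul]
  congr 1
  rw [← degree_eq_sum]
  rw [Finsupp.degree_eq_weight_one]
  exact h (mem_support_iff.mp hs)

lemma pderiv_isHomogeneous {d : ℕ} {P : MvPolynomial (Fin n) ℂ}
    (h : P.IsHomogeneous d) (i : Fin n) :
    (pderiv i P).IsHomogeneous (d - 1) := by
  conv_lhs => rw [P.as_sum]
  rw [map_sum]
  apply IsHomogeneous.sum
  intro s hs
  rw [pderiv_monomial]
  by_cases hsi : s i = 0
  · simp only [hsi, Nat.cast_zero, mul_zero, monomial_zero]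
    exact isHomogeneous_zero _ _ _
  · apply isHomogeneous_monomial
    have hds : s.degree = d := by
      rw [Finsupp.degree_eq_weight_one]; exact h (mem_support_iff.mp hs)
    have hle : Finsupp.single i 1 ≤ s := by rw [Finsupp.single_le_iff]; omega
    have hsplit : (s - Finsupp.single i 1) + Finsupp.single i 1 = s :=
      tsub_add_cancel_of_le hle
    have hadd : ∀ a b : Fin n →₀ ℕ, (a + b).degree = a.degree + b.degree := by
      intro a b; simp [Finsupp.degree_eq_weight_one, map_add]
    have h1deg : (Finsupp.single i 1 : Fin n →₀ ℕ).degree = 1 := by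
      exact Finsupp.degree_single i 1
    have := congrArg Finsupp.degree hsplit
    rw [hadd, h1deg, hds] at this
    omega

lemma pderiv_rho (j : Fin n) : pderiv j (rhoP n) = X j := by
  rw [rhoP, pderiv_C_mul, map_sum]
  have : ∀ i : Fin n, pderiv j (X i ^ 2) = if i = j then (2 * X j : MvPolynomial (Fin n) ℂ) else 0 := by
    intro i
    rcases eq_or_ne i j with rfl | h
    · simp [pderiv_pow]
    · simp [pderiv_pow, pderiv_X_of_ne h, h]
  rw [Finset.sum_congr rfl fun i _ => this i, Finset.sum_ite_eq' _ j,
    if_pos (Finset.mem_univ j), ← mul_assoc]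
  have h2 : (2 : MvPolynomial (Fin n) ℂ) = C 2 := (map_ofNat C 2).symm
  rw [h2, ← C_mul]
  norm_num

lemma lap_rho_mul (Q : MvPolynomial (Fin n) ℂ) :
    lapP (rhoP n * Q) =
      n • Q + 2 • (∑ j : Fin n, X j * pderiv j Q) + rhoP n * lapP Q := by
  rw [lapP]
  have key : ∀ j : Fin n, pderiv j (pderiv j (rhoP n * Q))
      = Q + 2 • (X j * pderiv j Q) + rhoP n * pderiv j (pderiv j Q) := by
    intro j
    rw [pderiv_mul, pderiv_rho, map_add, pderiv_mul, pderiv_mul, pderiv_rho, pderiv_X_self, two_smul]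
    ring
  rw [Finset.sum_congr rfl fun j _ => key j]
  rw [Finset.sum_add_distrib, Finset.sum_add_distrib, ← Finset.mul_sum, ← Finset.smul_sum,
    Finset.sum_const, Finset.card_univ, Fintype.card_fin, lapP]

lemma lapP_sub (f g : MvPolynomial (Fin n) ℂ) : lapP (f - g) = lapP f - lapP g := by
  simp [lapP, map_sub, Finset.sum_sub_distrib]

lemma lapP_C_mul (a : ℂ) (f : MvPolynomial (Fin n) ℂ) : lapP (C a * f) = C a * lapP f := by
  simp [lapP, pderiv_C_mul, Finset.mul_sum]

lemma pderiv_eq_zero_of_deg0 {P : MvPolynomial (Fin n) ℂ}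
    (h : P.IsHomogeneous 0) (i : Fin n) : pderiv i P = 0 := by
  conv_lhs => rw [P.as_sum]
  rw [map_sum]
  apply Finset.sum_eq_zero
  intro s hs
  have h0 : s i = 0 :=
    (totalDegree_eq_zero_iff _ P).mp (Nat.le_zero.mp h.totalDegree_le) s hs i
  rw [pderiv_monomial, h0]
  simp

end DaggerAux

open DaggerAux

/-- If `P` is homogeneous of degree `d` with `Δ²P = 0` and `2d + n - 4 ≠ 0`, then
`P† = P - (ρ/(2d+n-4))·ΔP` is harmonic. -/
theorem dagger_is_harmonic (n d : ℕ) (P : MvPolynomial (Fin n) ℂ)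
    (hhom : P.IsHomogeneous d) (hbih : lapP (lapP P) = 0)
    (hden : (2 * (d : ℂ) + (n : ℂ)) - 4 ≠ 0) :
    lapP (P - C (1 / (2 * (d : ℂ) + (n : ℂ) - 4)) * rhoP n * lapP P) = 0 := by
  set Q := lapP P with hQ
  rw [mul_assoc, lapP_sub, lapP_C_mul, lap_rho_mul, ← hQ]
  by_cases hd2 : 2 ≤ d
  · -- main case
    have hQhom : Q.IsHomogeneous (d - 1 - 1) := by
      rw [hQ, lapP]
      apply IsHomogeneous.sum
      intro j _
      exact pderiv_isHomogeneous (pderiv_isHomogeneous hhom j) j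
    rw [euler hQhom, show lapP Q = 0 from hbih, mul_zero, add_zero,
      smul_smul, ← add_smul, nsmul_eq_mul, ← C_eq_coe_nat, ← mul_assoc, ← C_mul]
    have hm : ((n + 2 * (d - 1 - 1) : ℕ) : ℂ) = 2 * (d : ℂ) + (n : ℂ) - 4 := by
      have he : d - 1 - 1 = d - 2 := by omega
      rw [he]
      push_cast [Nat.cast_sub hd2]
      ring
    rw [hm, one_div, inv_mul_cancel₀ hden, C_1, one_mul, sub_self]
  · -- degenerate case: Q = 0
    have hQ0 : Q = 0 := by
      rw [hQ, lapP]
      apply Finset.sum_eq_zero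
      intro j _
      interval_cases d
      · rw [pderiv_eq_zero_of_deg0 hhom j, map_zero]
      · rw [pderiv_eq_zero_of_deg0 (pderiv_isHomogeneous hhom j) j]
    rw [hQ0]
    simp [lapP]
end
end

section
/- Define π on the generators X_{i,j} of g = o(p,q)⊗ℂ by: π(X_{i,j}) = x_i∂_{x_j} - x_j∂_{x_i} if i,j ∈ [p]; π(X_{i,j}) = -y_{i-p}∂_{y_{j-p}} + y_{j-p}∂_{y_{i-p}} if i,j ∈ p+[q]; π(X_{i,j}) = -√-1(x_i y_{j-p} + ∂_{x_i}∂_{y_{j-p}}) if i ∈ [p], j ∈ p+[q]; and π(X_{i,j}) = √-1(x_j y_{i-p} + ∂_{x_j}∂_{y_{i-p}}) if i ∈ p+[q], j ∈ [p]. Then π preserves Lie brackets: π([X_{i,j}, X_{k,l}]) = [π(X_{i,j}), π(X_{k,l})] for all i,j,k,l, so π extends to a representation of g by polynomial coefficient differential operators. -/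
open MvPolynomial Matrix

noncomputable section

abbrev PolyPQ (p q : ℕ) := MvPolynomial (Fin p ⊕ Fin q) ℂ

noncomputable def mulOp {p q : ℕ} (f : PolyPQ p q) : Module.End ℂ (PolyPQ p q) :=
  LinearMap.mulLeft ℂ f

noncomputable def DOp {p q : ℕ} (i : Fin p ⊕ Fin q) : Module.End ℂ (PolyPQ p q) :=
  (pderiv i).toLinearMap

/-- The variable (x or y) corresponding to an index in {1,…,p+q}. -/
def idx (p q : ℕ) (i : Fin (p + q)) : Fin p ⊕ Fin q :=
  if h : (i : ℕ) < p then Sum.inl ⟨i, h⟩ else Sum.inr ⟨(i : ℕ) - p, by omega⟩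

/-- π on the generators X_{i,j} (the oscillator-type representation). -/
noncomputable def piGen (p q : ℕ) (i j : Fin (p + q)) : Module.End ℂ (PolyPQ p q) :=
  if (i : ℕ) < p then
    if (j : ℕ) < p then
      mulOp (X (idx p q i)) * DOp (idx p q j) - mulOp (X (idx p q j)) * DOp (idx p q i)
    else
      -Complex.I • (mulOp (X (idx p q i)) * mulOp (X (idx p q j)) +
        DOp (idx p q i) * DOp (idx p q j))
  else
    if (j : ℕ) < p then
      Complex.I • (mulOp (X (idx p q j)) * mulOp (X (idx p q i)) +
        DOp (idx p q j) * DOp (idx p q i))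
    else
      mulOp (X (idx p q j)) * DOp (idx p q i) - mulOp (X (idx p q i)) * DOp (idx p q j)

/-- ε_i = 1 if i ≤ p, -1 otherwise. -/
def eps (p q : ℕ) (i : Fin (p + q)) : ℂ := if (i : ℕ) < p then 1 else -1

/-- X_{i,j} = ε_j E_{i,j} - ε_i E_{j,i}. -/
noncomputable def Xgen (p q : ℕ) (i j : Fin (p + q)) : Matrix (Fin (p + q)) (Fin (p + q)) ℂ :=
  eps p q j • Matrix.single i j 1 - eps p q i • Matrix.single j i 1

/-- The linear extension of π to matrices in g, using the basis expansion
A = Σ_{i<j} (ε_j A_{i,j}) X_{i,j}. -/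
noncomputable def piMat (p q : ℕ) (A : Matrix (Fin (p + q)) (Fin (p + q)) ℂ) :
    Module.End ℂ (PolyPQ p q) :=
  ∑ i : Fin (p + q), ∑ j : Fin (p + q),
    if i < j then (eps p q j * A i j) • piGen p q i j else 0

/-! ### Auxiliary lemmas -/

lemma pderiv_pderiv_comm {σ R : Type*} [CommRing R] [DecidableEq σ] (i j : σ)
    (f : MvPolynomial σ R) : pderiv i (pderiv j f) = pderiv j (pderiv i f) := by
  induction f using MvPolynomial.induction_on with
  | C a => simp
  | add p q hp hq => simp [hp, hq]
  | mul_X p s hp =>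
    simp [pderiv_mul, pderiv_X, Pi.single_apply, hp,
      apply_ite (pderiv i), apply_ite (pderiv j)]
    split_ifs <;> ring

lemma DOp_comm {p q : ℕ} (i j : Fin p ⊕ Fin q) :
    (DOp i : Module.End ℂ (PolyPQ p q)) * DOp j = DOp j * DOp i :=
  LinearMap.ext fun f => pderiv_pderiv_comm i j f

lemma mulOp_comm {p q : ℕ} (f g : PolyPQ p q) :
    mulOp f * mulOp g = mulOp g * mulOp f :=
  LinearMap.ext fun h => by
    simp [mulOp, LinearMap.mulLeft_apply]; ring

lemma DOp_mulOp {p q : ℕ} (i j : Fin p ⊕ Fin q) :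
    (DOp i : Module.End ℂ (PolyPQ p q)) * mulOp (X j) =
      mulOp (X j) * DOp i + if i = j then 1 else 0 := by
  apply LinearMap.ext; intro f
  simp [DOp, mulOp, pderiv_mul, pderiv_X, Pi.single_apply, LinearMap.mulLeft_apply]
  split_ifs <;> simp_all [mul_comm]

lemma DOp_mulOp_comm {p q : ℕ} {i j : Fin p ⊕ Fin q} (h : i ≠ j) :
    (DOp i : Module.End ℂ (PolyPQ p q)) * mulOp (X j) = mulOp (X j) * DOp i := by
  rw [DOp_mulOp, if_neg h, add_zero]

/-- creation-type operators -/
noncomputable def Uop {p q : ℕ} : Fin p ⊕ Fin q → Module.End ℂ (PolyPQ p q)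
  | Sum.inl a => mulOp (X (Sum.inl a))
  | Sum.inr a => Complex.I • DOp (Sum.inr a)

/-- annihilation-type operators -/
noncomputable def Vop {p q : ℕ} : Fin p ⊕ Fin q → Module.End ℂ (PolyPQ p q)
  | Sum.inl a => DOp (Sum.inl a)
  | Sum.inr a => Complex.I • mulOp (X (Sum.inr a))

lemma Uop_comm {p q : ℕ} (a b : Fin p ⊕ Fin q) : Uop a * Uop b = Uop b * Uop a := by
  cases a <;> cases b <;>
    simp only [Uop, smul_mul_assoc, mul_smul_comm, mulOp_comm, DOp_comm]
  · rw [DOp_mulOp_comm (by simp)]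
  · rw [DOp_mulOp_comm (by simp)]

lemma Vop_comm {p q : ℕ} (a b : Fin p ⊕ Fin q) : Vop a * Vop b = Vop b * Vop a := by
  cases a <;> cases b <;>
    simp only [Vop, smul_mul_assoc, mul_smul_comm, mulOp_comm, DOp_comm]
  · rw [DOp_mulOp_comm (by simp)]
  · rw [DOp_mulOp_comm (by simp)]

lemma Vop_Uop {p q : ℕ} (a b : Fin p ⊕ Fin q) :
    (Vop a : Module.End ℂ (PolyPQ p q)) * Uop b =
      Uop b * Vop a + if a = b then 1 else 0 := by
  cases a <;> cases b <;>
    simp only [Vop, Uop, smul_mul_assoc, mul_smul_comm, smul_smul]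
  · rw [DOp_mulOp]
  · rw [DOp_comm]; simp
  · rw [mulOp_comm]; simp
  · rename_i a b
    rw [DOp_mulOp (Sum.inr b) (Sum.inr a)]
    rcases eq_or_ne a b with rfl | h
    · simp [smul_add, Complex.I_mul_I, smul_smul]
    · simp [Sum.inr.injEq, h, Ne.symm h]

/-- gl-type operators -/
noncomputable def Egen (p q : ℕ) (i j : Fin (p + q)) : Module.End ℂ (PolyPQ p q) :=
  Uop (idx p q i) * Vop (idx p q j)

lemma idx_inj {p q : ℕ} {i j : Fin (p + q)} (h : idx p q i = idx p q j) : i = j := by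
  unfold idx at h
  split_ifs at h <;> simp_all [Sum.inl.injEq, Sum.inr.injEq, Fin.ext_iff] <;> omega

lemma UV_mul {p q : ℕ} (a b c d : Fin p ⊕ Fin q) :
    (Uop a * Vop b) * (Uop c * Vop d) =
      (Uop a * Uop c) * (Vop b * Vop d) + (if b = c then Uop a * Vop d else 0) := by
  calc (Uop a * Vop b) * (Uop c * Vop d)
      = Uop a * ((Vop b * Uop c) * Vop d) := by noncomm_ring
    _ = Uop a * ((Uop c * Vop b + (if b = c then 1 else 0)) * Vop d) := by rw [Vop_Uop]
    _ = (Uop a * Uop c) * (Vop b * Vop d) + (if b = c then Uop a * Vop d else 0) := by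
        split_ifs <;> noncomm_ring

lemma ite_idx {p q : ℕ} {b c : Fin (p + q)} {α : Type*} (x y : α) :
    (if idx p q b = idx p q c then x else y) = if b = c then x else y := by
  rcases eq_or_ne b c with rfl | h
  · simp
  · rw [if_neg h, if_neg fun hh => h (idx_inj hh)]

lemma ite_swap_eq {ι α : Type*} [DecidableEq ι] (a b : ι) (x y : α) :
    (if a = b then x else y) = if b = a then x else y := by
  rcases eq_or_ne a b with rfl | h
  · rfl
  · rw [if_neg h, if_neg (Ne.symm h)]

lemma Egen_rel (p q : ℕ) (a b c d : Fin (p + q)) :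
    Egen p q a b * Egen p q c d =
      Egen p q c d * Egen p q a b + (if b = c then Egen p q a d else 0)
        - (if a = d then Egen p q c b else 0) := by
  unfold Egen
  rw [UV_mul, UV_mul, Uop_comm (idx p q c) (idx p q a), Vop_comm (idx p q d) (idx p q b),
    ite_idx, ite_idx, ite_swap_eq d a]
  abel

set_option maxHeartbeats 1000000 in
/-- The abstract bracket computation. -/
lemma bracket_aux {A : Type*} [Ring A] [Algebra ℂ A] {ι : Type*} [DecidableEq ι]
    (ε : ι → ℂ) (e : ι → ι → A)
    (he : ∀ a b c d, e a b * e c d =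
      e c d * e a b + (if b = c then e a d else 0) - (if a = d then e c b else 0))
    (i j k l : ι) :
    (ε j • e i j - ε i • e j i) * (ε l • e k l - ε k • e l k)
      - (ε l • e k l - ε k • e l k) * (ε j • e i j - ε i • e j i)
    = (if j = k then ε j • (ε l • e i l - ε i • e l i) else 0)
      + (if i = l then ε i • (ε k • e j k - ε j • e k j) else 0)
      - (if j = l then ε j • (ε k • e i k - ε i • e k i) else 0)
      - (if i = k then ε i • (ε l • e j l - ε j • e l j) else 0) := by
  simp only [sub_mul, mul_sub, smul_mul_assoc, mul_smul_comm]
  rw [he i j k l, he i j l k, he j i k l, he j i l k]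
  split_ifs <;> subst_vars <;> module

lemma idx_lt {p q : ℕ} {i : Fin (p + q)} (h : (i : ℕ) < p) :
    idx p q i = Sum.inl ⟨i, h⟩ := dif_pos h

lemma idx_ge {p q : ℕ} {i : Fin (p + q)} (h : ¬ (i : ℕ) < p) :
    idx p q i = Sum.inr ⟨(i : ℕ) - p, by omega⟩ := dif_neg h

lemma DOp_mulOp_swap {p q : ℕ} (a b : Fin p ⊕ Fin q) :
    (DOp a : Module.End ℂ (PolyPQ p q)) * mulOp (X b) - DOp b * mulOp (X a)
      = mulOp (X b) * DOp a - mulOp (X a) * DOp b := by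
  rw [DOp_mulOp, DOp_mulOp, ite_swap_eq b a]
  abel

lemma piGen_eq (p q : ℕ) (i j : Fin (p + q)) :
    piGen p q i j = eps p q j • Egen p q i j - eps p q i • Egen p q j i := by
  by_cases hi : (i : ℕ) < p <;> by_cases hj : (j : ℕ) < p
  · rw [piGen, if_pos hi, if_pos hj, eps, eps, if_pos hi, if_pos hj, Egen, Egen,
      idx_lt hi, idx_lt hj]
    simp only [Uop, Vop, one_smul]
  · rw [piGen, if_pos hi, if_neg hj, eps, eps, if_pos hi, if_neg hj, Egen, Egen,
      idx_lt hi, idx_ge hj]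
    simp only [Uop, Vop, one_smul, smul_mul_assoc, mul_smul_comm, smul_smul]
    rw [DOp_comm (Sum.inl ⟨i, hi⟩) (Sum.inr ⟨(j : ℕ) - p, by omega⟩)]
    module
  · rw [piGen, if_neg hi, if_pos hj, eps, eps, if_neg hi, if_pos hj, Egen, Egen,
      idx_ge hi, idx_lt hj]
    simp only [Uop, Vop, one_smul, smul_mul_assoc, mul_smul_comm, smul_smul]
    rw [DOp_comm (Sum.inl ⟨j, hj⟩) (Sum.inr ⟨(i : ℕ) - p, by omega⟩)]
    module
  · rw [piGen, if_neg hi, if_neg hj, eps, eps, if_neg hi, if_neg hj, Egen, Egen,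
      idx_ge hi, idx_ge hj]
    simp only [Uop, Vop, one_smul, smul_mul_assoc, mul_smul_comm, smul_smul,
      Complex.I_mul_I, neg_smul, one_smul, neg_neg]
    rw [← DOp_mulOp_swap (Sum.inr ⟨(i : ℕ) - p, by omega⟩) (Sum.inr ⟨(j : ℕ) - p, by omega⟩)]
    module

lemma std_mul_ite (p q : ℕ) (x y z w : Fin (p + q)) :
    Matrix.single x y (1 : ℂ) * Matrix.single z w 1 =
      if y = z then Matrix.single x w 1 else 0 := by
  rcases eq_or_ne y z with rfl | h
  · rw [Matrix.single_mul_single_same, one_mul, if_pos rfl]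
  · simp [Matrix.single_mul_single_of_ne, h]

lemma std_rel (p q : ℕ) (a b c d : Fin (p + q)) :
    Matrix.single a b (1 : ℂ) * Matrix.single c d 1 =
      Matrix.single c d 1 * Matrix.single a b 1
        + (if b = c then Matrix.single a d 1 else 0)
        - (if a = d then Matrix.single c b 1 else 0) := by
  rw [std_mul_ite, std_mul_ite, ite_swap_eq d a]
  abel

lemma Xgen_bracket (p q : ℕ) (i j k l : Fin (p + q)) :
    Xgen p q i j * Xgen p q k l - Xgen p q k l * Xgen p q i j
      = (if j = k then eps p q j • Xgen p q i l else 0)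
        + (if i = l then eps p q i • Xgen p q j k else 0)
        - (if j = l then eps p q j • Xgen p q i k else 0)
        - (if i = k then eps p q i • Xgen p q j l else 0) := by
  unfold Xgen
  exact bracket_aux (eps p q) (fun a b => Matrix.single a b 1) (std_rel p q) i j k l

lemma piMat_zero (p q : ℕ) : piMat p q 0 = 0 := by
  simp [piMat]

lemma piMat_add (p q : ℕ) (A B : Matrix (Fin (p + q)) (Fin (p + q)) ℂ) :
    piMat p q (A + B) = piMat p q A + piMat p q B := by
  unfold piMat
  rw [← Finset.sum_add_distrib]
  refine Finset.sum_congr rfl fun a _ => ?_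
  rw [← Finset.sum_add_distrib]
  refine Finset.sum_congr rfl fun b _ => ?_
  split_ifs
  · rw [Matrix.add_apply, mul_add, add_smul]
  · rw [add_zero]

lemma piMat_smul (p q : ℕ) (c : ℂ) (A : Matrix (Fin (p + q)) (Fin (p + q)) ℂ) :
    piMat p q (c • A) = c • piMat p q A := by
  unfold piMat
  rw [Finset.smul_sum]
  refine Finset.sum_congr rfl fun a _ => ?_
  rw [Finset.smul_sum]
  refine Finset.sum_congr rfl fun b _ => ?_
  split_ifs
  · rw [Matrix.smul_apply, smul_eq_mul, smul_smul]
    ring_nf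
  · rw [smul_zero]

lemma piMat_sub (p q : ℕ) (A B : Matrix (Fin (p + q)) (Fin (p + q)) ℂ) :
    piMat p q (A - B) = piMat p q A - piMat p q B := by
  have := piMat_add p q (A - B) B
  rw [sub_add_cancel] at this
  rw [this]; abel

lemma piMat_stdBasis (p q : ℕ) (i j : Fin (p + q)) (c : ℂ) :
    piMat p q (Matrix.single i j c)
      = if i < j then (eps p q j * c) • piGen p q i j else 0 := by
  unfold piMat
  have hterm : ∀ a b : Fin (p + q),
      (if a < b then (eps p q b * Matrix.single i j c a b) • piGen p q a b else 0)
        = if j = b then (if i = a then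
            (if a < b then (eps p q b * c) • piGen p q a b else 0) else 0) else 0 := by
    intro a b
    rcases eq_or_ne i a with rfl | h
    · rcases eq_or_ne j b with rfl | h'
      · rw [Matrix.single_apply_same, if_pos rfl, if_pos rfl]
      · rw [Matrix.single_apply_of_col_ne i i h' c, if_neg h',
          mul_zero, zero_smul, ite_self]
    · rcases eq_or_ne j b with rfl | h'
      · rw [Matrix.single_apply_of_row_ne h j j c, if_pos rfl, if_neg h,
          mul_zero, zero_smul, ite_self]
      · rw [Matrix.single_apply_of_row_ne h j b c, if_neg h',
          mul_zero, zero_smul, ite_self]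
  simp_rw [hterm]
  simp only [Finset.sum_ite_eq, Finset.mem_univ, if_true]

lemma piGen_diag (p q : ℕ) (i : Fin (p + q)) : piGen p q i i = 0 := by
  rw [piGen_eq]; exact sub_self _

lemma piGen_antisymm (p q : ℕ) (i j : Fin (p + q)) : piGen p q i j = -piGen p q j i := by
  rw [piGen_eq, piGen_eq]
  module

lemma eps_sq (p q : ℕ) (i : Fin (p + q)) : eps p q i * eps p q i = 1 := by
  unfold eps; split_ifs <;> norm_num

lemma piMat_Xgen (p q : ℕ) (i j : Fin (p + q)) :
    piMat p q (Xgen p q i j) = piGen p q i j := by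
  unfold Xgen
  rw [piMat_sub, piMat_smul, piMat_smul, piMat_stdBasis, piMat_stdBasis]
  rcases lt_trichotomy i j with h | rfl | h
  · rw [if_pos h, if_neg (lt_asymm h)]
    simp [smul_smul, eps_sq]
  · rw [if_neg (lt_irrefl i)]
    simp [piGen_diag]
  · rw [if_neg (lt_asymm h), if_pos h]
    simp only [smul_zero, zero_sub, mul_one, smul_smul, eps_sq, one_smul]
    exact (piGen_antisymm p q i j).symm

/-- π preserves Lie brackets on the generators, so it extends to a representation of g. -/
theorem piGen_bracket (p q : ℕ) :
    ∀ i j k l : Fin (p + q),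
      piMat p q (Xgen p q i j * Xgen p q k l - Xgen p q k l * Xgen p q i j) =
        piGen p q i j * piGen p q k l - piGen p q k l * piGen p q i j := by
  intro i j k l
  have hite : ∀ (c : Prop) (_ : Decidable c) (a b : Fin (p + q)) (ε : ℂ),
      piMat p q (if c then ε • Xgen p q a b else 0) = if c then ε • piGen p q a b else 0 := by
    intro c _ a b ε
    split_ifs
    · rw [piMat_smul, piMat_Xgen]
    · exact piMat_zero p q
  rw [Xgen_bracket, piMat_sub, piMat_sub, piMat_add, hite, hite, hite, hite]
  simp only [piGen_eq]
  exact (bracket_aux (eps p q) (Egen p q) (Egen_rel p q) i j k l).symm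

end
end

section
/- Under the representation π of o(p,q)⊗ℂ by differential operators, the Casimir element Ω_g = Σ_{i<j} X_{i,j}X_{i,j}^∨ acts as (E_x - E_y)² + (p-q)(E_x - E_y) - 2(E_x + E_y) - (r_x²r_y² + r_x²Δ_x + r_y²Δ_y + Δ_xΔ_y) - pq. -/
open MvPolynomial

noncomputable section

noncomputable def Ex (p q : ℕ) : Module.End ℂ (PolyPQ p q) :=
  ∑ i : Fin p, mulOp (X (Sum.inl i)) * DOp (Sum.inl i)

noncomputable def Ey (p q : ℕ) : Module.End ℂ (PolyPQ p q) :=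
  ∑ j : Fin q, mulOp (X (Sum.inr j)) * DOp (Sum.inr j)

noncomputable def rx2 (p q : ℕ) : Module.End ℂ (PolyPQ p q) :=
  mulOp (∑ i : Fin p, X (Sum.inl i) ^ 2)

noncomputable def ry2 (p q : ℕ) : Module.End ℂ (PolyPQ p q) :=
  mulOp (∑ j : Fin q, X (Sum.inr j) ^ 2)

noncomputable def Dx (p q : ℕ) : Module.End ℂ (PolyPQ p q) :=
  ∑ i : Fin p, DOp (Sum.inl i) * DOp (Sum.inl i)

noncomputable def Dy (p q : ℕ) : Module.End ℂ (PolyPQ p q) :=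
  ∑ j : Fin q, DOp (Sum.inr j) * DOp (Sum.inr j)

/-- π of the dual generator X_{i,j}^∨: -X_{i,j} if i,j both in [p] or both in p+[q],
X_{i,j} otherwise. -/
noncomputable def piVee (p q : ℕ) (i j : Fin (p + q)) : Module.End ℂ (PolyPQ p q) :=
  if ((i : ℕ) < p ∧ (j : ℕ) < p) ∨ (p ≤ (i : ℕ) ∧ p ≤ (j : ℕ)) then -piGen p q i j
  else piGen p q i j


variable {p q : ℕ}

lemma pderiv_comm' (i j : Fin p ⊕ Fin q) (f : PolyPQ p q) :
    pderiv i (pderiv j f) = pderiv j (pderiv i f) := by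
  induction f using MvPolynomial.induction_on with
  | C a => simp
  | add f g hf hg => simp [hf, hg]
  | mul_X f k hf =>
      have h1 : ∀ a b c : Fin p ⊕ Fin q, pderiv a ((pderiv b) (X c) : PolyPQ p q) = 0 := by
        intro a b c
        rcases eq_or_ne c b with rfl | hb
        · simp
        · simp [hb]
      simp only [pderiv_mul, map_add, hf, h1]
      ring

lemma mulOp_mul (f g : PolyPQ p q) : mulOp (f * g) = mulOp f * mulOp g :=
  LinearMap.ext fun x => by simp [mulOp, mul_assoc]

lemma a_comm (f g : PolyPQ p q) : mulOp f * mulOp g = mulOp g * mulOp f := by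
  rw [← mulOp_mul, ← mulOp_mul, mul_comm]

lemma d_comm (i j : Fin p ⊕ Fin q) : DOp i * DOp j = DOp j * DOp i :=
  LinearMap.ext fun f => pderiv_comm' i j f

lemma d_a (i j : Fin p ⊕ Fin q) :
    DOp i * mulOp (X j) = mulOp (X j) * DOp i
      + (if i = j then 1 else 0 : Module.End ℂ (PolyPQ p q)) :=
  LinearMap.ext fun f => by
    rcases eq_or_ne i j with rfl | h
    · simp [DOp, mulOp, Module.End.mul_apply, pderiv_mul, add_comm]
    · simp [DOp, mulOp, Module.End.mul_apply, pderiv_mul, h, Ne.symm h]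

section Generic
variable (n : ℕ) (u : Fin n → Fin p ⊕ Fin q)

lemma d_a' (hu : Function.Injective u) (a b : Fin n) :
    DOp (u a) * mulOp (X (u b)) = mulOp (X (u b)) * DOp (u a)
      + (if a = b then 1 else 0 : Module.End ℂ (PolyPQ p q)) := by
  rw [d_a]
  congr 1
  by_cases h : a = b
  · simp [h]
  · simp only [if_neg h, if_neg (fun hc => h (hu hc))]

lemma subA (hu : Function.Injective u) :
    ∑ a : Fin n, ∑ b : Fin n,
        (mulOp (X (u a)) * DOp (u b)) * (mulOp (X (u a)) * DOp (u b)) =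
      (∑ a : Fin n, mulOp (X (u a)) * mulOp (X (u a))) *
        (∑ b : Fin n, DOp (u b) * DOp (u b)) +
      ∑ a : Fin n, mulOp (X (u a)) * DOp (u a) := by
  have key : ∀ a b : Fin n,
      (mulOp (X (u a)) * DOp (u b)) * (mulOp (X (u a)) * DOp (u b)) =
        (mulOp (X (u a)) * mulOp (X (u a))) * (DOp (u b) * DOp (u b)) +
          (if b = a then mulOp (X (u a)) * DOp (u b) else 0) := by
    intro a b
    have e1 := d_a' n u hu b a
    calc (mulOp (X (u a)) * DOp (u b)) * (mulOp (X (u a)) * DOp (u b))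
        = mulOp (X (u a)) * (DOp (u b) * mulOp (X (u a))) * DOp (u b) := by
          noncomm_ring
      _ = mulOp (X (u a)) * (mulOp (X (u a)) * DOp (u b)
            + (if b = a then 1 else 0)) * DOp (u b) := by rw [e1]
      _ = (mulOp (X (u a)) * mulOp (X (u a))) * (DOp (u b) * DOp (u b)) +
          (if b = a then mulOp (X (u a)) * DOp (u b) else 0) := by
          split_ifs <;> noncomm_ring
  simp only [key, Finset.sum_add_distrib, Finset.sum_ite_eq', Finset.mem_univ, if_true]
  rw [Finset.sum_mul_sum]

noncomputable def EE (u : Fin n → Fin p ⊕ Fin q) : Module.End ℂ (PolyPQ p q) :=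
  ∑ a : Fin n, mulOp (X (u a)) * DOp (u a)

noncomputable def RR (u : Fin n → Fin p ⊕ Fin q) : Module.End ℂ (PolyPQ p q) :=
  ∑ a : Fin n, mulOp (X (u a)) * mulOp (X (u a))

noncomputable def DD (u : Fin n → Fin p ⊕ Fin q) : Module.End ℂ (PolyPQ p q) :=
  ∑ a : Fin n, DOp (u a) * DOp (u a)

noncomputable def LL (u : Fin n → Fin p ⊕ Fin q) (a b : Fin n) :
    Module.End ℂ (PolyPQ p q) :=
  mulOp (X (u a)) * DOp (u b) - mulOp (X (u b)) * DOp (u a)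

lemma subB (hu : Function.Injective u) :
    ∑ a : Fin n, ∑ b : Fin n,
        (mulOp (X (u a)) * DOp (u b)) * (mulOp (X (u b)) * DOp (u a)) =
      EE n u * EE n u - EE n u + (n : ℂ) • EE n u := by
  have keyEE : ∀ a b : Fin n,
      (mulOp (X (u a)) * DOp (u a)) * (mulOp (X (u b)) * DOp (u b)) =
        mulOp (X (u a)) * mulOp (X (u b)) * (DOp (u a) * DOp (u b)) +
          (if a = b then mulOp (X (u a)) * DOp (u b) else 0) := by
    intro a b
    have e1 := d_a' n u hu a b
    calc (mulOp (X (u a)) * DOp (u a)) * (mulOp (X (u b)) * DOp (u b))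
        = mulOp (X (u a)) * (DOp (u a) * mulOp (X (u b))) * DOp (u b) := by
          noncomm_ring
      _ = mulOp (X (u a)) * (mulOp (X (u b)) * DOp (u a)
            + (if a = b then 1 else 0)) * DOp (u b) := by rw [e1]
      _ = mulOp (X (u a)) * mulOp (X (u b)) * (DOp (u a) * DOp (u b)) +
          (if a = b then mulOp (X (u a)) * DOp (u b) else 0) := by
          split_ifs <;> noncomm_ring
  have hEE : EE n u * EE n u =
      (∑ a : Fin n, ∑ b : Fin n,
        mulOp (X (u a)) * mulOp (X (u b)) * (DOp (u a) * DOp (u b))) + EE n u := by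
    rw [EE, Finset.sum_mul_sum]
    simp only [keyEE, Finset.sum_add_distrib, Finset.sum_ite_eq, Finset.mem_univ, if_true]
  have keyB : ∀ a b : Fin n,
      (mulOp (X (u a)) * DOp (u b)) * (mulOp (X (u b)) * DOp (u a)) =
        mulOp (X (u a)) * mulOp (X (u b)) * (DOp (u a) * DOp (u b)) +
          mulOp (X (u a)) * DOp (u a) := by
    intro a b
    have e1 : DOp (u b) * mulOp (X (u b)) = mulOp (X (u b)) * DOp (u b) + 1 := by
      rw [d_a' n u hu b b]; simp
    calc (mulOp (X (u a)) * DOp (u b)) * (mulOp (X (u b)) * DOp (u a))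
        = mulOp (X (u a)) * (DOp (u b) * mulOp (X (u b))) * DOp (u a) := by
          noncomm_ring
      _ = mulOp (X (u a)) * (mulOp (X (u b)) * DOp (u b) + 1) * DOp (u a) := by rw [e1]
      _ = mulOp (X (u a)) * mulOp (X (u b)) * (DOp (u b) * DOp (u a)) +
          mulOp (X (u a)) * DOp (u a) := by noncomm_ring
      _ = mulOp (X (u a)) * mulOp (X (u b)) * (DOp (u a) * DOp (u b)) +
          mulOp (X (u a)) * DOp (u a) := by rw [d_comm]
  simp only [keyB, Finset.sum_add_distrib, Finset.sum_const, Finset.card_univ,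
    Fintype.card_fin]
  rw [hEE]
  have : ∑ a : Fin n, n • (mulOp (X (u a)) * DOp (u a)) = (n : ℂ) • EE n u := by
    rw [EE, ← Finset.smul_sum, Nat.cast_smul_eq_nsmul]
  rw [this]
  abel

lemma sumLL (hu : Function.Injective u) :
    ∑ a : Fin n, ∑ b : Fin n, LL n u a b * LL n u a b =
      (2 : ℂ) • (RR n u * DD n u + (2 : ℂ) • EE n u - EE n u * EE n u
        - (n : ℂ) • EE n u) := by
  have expand : ∀ a b : Fin n, LL n u a b * LL n u a b =
      (mulOp (X (u a)) * DOp (u b)) * (mulOp (X (u a)) * DOp (u b))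
      + (mulOp (X (u b)) * DOp (u a)) * (mulOp (X (u b)) * DOp (u a))
      - (mulOp (X (u a)) * DOp (u b)) * (mulOp (X (u b)) * DOp (u a))
      - (mulOp (X (u b)) * DOp (u a)) * (mulOp (X (u a)) * DOp (u b)) := by
    intro a b; rw [LL, sub_mul, mul_sub, mul_sub]; abel
  simp only [expand]
  simp only [Finset.sum_sub_distrib, Finset.sum_add_distrib]
  have h1 := subA n u hu
  have h2 := subB n u hu
  simp only [EE] at h2
  have h1' : ∑ a : Fin n, ∑ b : Fin n,
      (mulOp (X (u b)) * DOp (u a)) * (mulOp (X (u b)) * DOp (u a)) =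
      (∑ a : Fin n, mulOp (X (u a)) * mulOp (X (u a))) *
        (∑ b : Fin n, DOp (u b) * DOp (u b)) +
      ∑ a : Fin n, mulOp (X (u a)) * DOp (u a) := by
    rw [Finset.sum_comm]; exact h1
  have h2' : ∑ a : Fin n, ∑ b : Fin n,
      (mulOp (X (u b)) * DOp (u a)) * (mulOp (X (u a)) * DOp (u b)) =
      (∑ a : Fin n, mulOp (X (u a)) * DOp (u a)) *
        (∑ a : Fin n, mulOp (X (u a)) * DOp (u a)) -
      (∑ a : Fin n, mulOp (X (u a)) * DOp (u a)) +
      (n : ℂ) • ∑ a : Fin n, mulOp (X (u a)) * DOp (u a) := by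
    rw [Finset.sum_comm]; exact h2
  rw [RR, DD, EE, h1, h2, h1', h2']
  module

lemma sumLT (hu : Function.Injective u) :
    ∑ a : Fin n, ∑ b : Fin n, (if a < b then LL n u a b * LL n u a b else 0) =
      RR n u * DD n u + (2 : ℂ) • EE n u - EE n u * EE n u - (n : ℂ) • EE n u := by
  refine smul_right_injective (Module.End ℂ (PolyPQ p q)) (two_ne_zero (α := ℂ)) ?_
  show (2 : ℂ) • _ = (2 : ℂ) • _
  rw [← sumLL n u hu]
  refine Eq.symm ?_
  have symm : ∀ a b : Fin n, LL n u b a * LL n u b a = LL n u a b * LL n u a b := by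
    intro a b
    have : LL n u b a = -LL n u a b := by rw [LL, LL]; abel
    rw [this]; exact neg_mul_neg (α := Module.End ℂ (PolyPQ p q)) _ _
  have diag : ∀ a : Fin n, LL n u a a * LL n u a a = 0 := by
    intro a; rw [LL, sub_self, zero_mul]
  have split : ∀ a b : Fin n, LL n u a b * LL n u a b =
      (if a < b then LL n u a b * LL n u a b else 0)
      + (if b < a then LL n u a b * LL n u a b else 0) := by
    intro a b
    rcases lt_trichotomy a b with h | rfl | h
    · rw [if_pos h, if_neg (asymm h), add_zero]
    · simp [diag a]
    · rw [if_neg (asymm h), if_pos h, zero_add]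
  calc ∑ a : Fin n, ∑ b : Fin n, LL n u a b * LL n u a b
      = ∑ a : Fin n, ∑ b : Fin n, ((if a < b then LL n u a b * LL n u a b else 0)
      + (if b < a then LL n u a b * LL n u a b else 0)) := by
        exact Finset.sum_congr rfl fun a _ => Finset.sum_congr rfl fun b _ => split a b
    _ = (∑ a : Fin n, ∑ b : Fin n, (if a < b then LL n u a b * LL n u a b else 0))
      + (∑ a : Fin n, ∑ b : Fin n, (if b < a then LL n u a b * LL n u a b else 0)) := by
        simp only [Finset.sum_add_distrib]
    _ = (2 : ℂ) • ∑ a : Fin n, ∑ b : Fin n,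
          (if a < b then LL n u a b * LL n u a b else 0) := by
        rw [Finset.sum_comm (f := fun a b =>
          (if b < a then LL n u a b * LL n u a b else 0))]
        simp only [symm]
        rw [two_smul]
end Generic


lemma mulOp_sum {α : Type*} (s : Finset α) (f : α → PolyPQ p q) :
    mulOp (∑ a ∈ s, f a) = ∑ a ∈ s, mulOp (f a) :=
  LinearMap.ext fun x => by simp [mulOp, Finset.sum_mul]

lemma rx2_eq : rx2 p q = RR p (Sum.inl : Fin p → Fin p ⊕ Fin q) := by
  rw [rx2, RR, mulOp_sum]
  exact Finset.sum_congr rfl fun a _ => by rw [sq, mulOp_mul]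

lemma ry2_eq : ry2 p q = RR q (Sum.inr : Fin q → Fin p ⊕ Fin q) := by
  rw [ry2, RR, mulOp_sum]
  exact Finset.sum_congr rfl fun a _ => by rw [sq, mulOp_mul]

lemma Ex_eq : Ex p q = EE p (Sum.inl : Fin p → Fin p ⊕ Fin q) := rfl
lemma Ey_eq : Ey p q = EE q (Sum.inr : Fin q → Fin p ⊕ Fin q) := rfl
lemma Dx_eq : Dx p q = DD p (Sum.inl : Fin p → Fin p ⊕ Fin q) := rfl
lemma Dy_eq : Dy p q = DD q (Sum.inr : Fin q → Fin p ⊕ Fin q) := rfl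

lemma cda (i : Fin p) (j : Fin q) :
    DOp (Sum.inl i) * mulOp (X (Sum.inr j))
      = mulOp (X (Sum.inr j)) * DOp (Sum.inl i : Fin p ⊕ Fin q) := by
  rw [d_a]; simp

lemma cad (i : Fin p) (j : Fin q) :
    DOp (Sum.inr j) * mulOp (X (Sum.inl i))
      = mulOp (X (Sum.inl i)) * DOp (Sum.inr j : Fin p ⊕ Fin q) := by
  rw [d_a]; simp

lemma dxa (i : Fin p) :
    DOp (Sum.inl i) * mulOp (X (Sum.inl i))
      = mulOp (X (Sum.inl i)) * DOp (Sum.inl i : Fin p ⊕ Fin q) + 1 := by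
  rw [d_a]; simp

lemma dyb (j : Fin q) :
    DOp (Sum.inr j) * mulOp (X (Sum.inr j))
      = mulOp (X (Sum.inr j)) * DOp (Sum.inr j : Fin p ⊕ Fin q) + 1 := by
  rw [d_a]; simp

noncomputable def KK (p q : ℕ) (i : Fin p) (j : Fin q) : Module.End ℂ (PolyPQ p q) :=
  mulOp (X (Sum.inl i)) * mulOp (X (Sum.inr j)) + DOp (Sum.inl i) * DOp (Sum.inr j)

lemma ExEy_comm : Ex p q * Ey p q = Ey p q * Ex p q := by
  rw [Ex, Ey, Finset.sum_mul_sum, Finset.sum_mul_sum]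
  rw [Finset.sum_comm]
  refine Finset.sum_congr rfl fun j _ => Finset.sum_congr rfl fun i _ => ?_
  set A := mulOp (X (Sum.inl i) : PolyPQ p q)
  set B := mulOp (X (Sum.inr j) : PolyPQ p q)
  set P := DOp (Sum.inl i : Fin p ⊕ Fin q)
  set Q := DOp (Sum.inr j : Fin p ⊕ Fin q)
  have hBA : B * A = A * B := a_comm _ _
  have hQP : Q * P = P * Q := d_comm _ _
  have hPB : P * B = B * P := cda i j
  have hQA : Q * A = A * Q := cad i j
  have e1 : (A * P) * (B * Q) = (A * B) * (P * Q) := by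
    calc (A * P) * (B * Q) = A * (P * B) * Q := by noncomm_ring
      _ = A * (B * P) * Q := by rw [hPB]
      _ = (A * B) * (P * Q) := by noncomm_ring
  have e2 : (B * Q) * (A * P) = (A * B) * (P * Q) := by
    calc (B * Q) * (A * P) = B * (Q * A) * P := by noncomm_ring
      _ = B * (A * Q) * P := by rw [hQA]
      _ = (B * A) * (Q * P) := by noncomm_ring
      _ = (A * B) * (P * Q) := by rw [hBA, hQP]
  rw [e1, e2]

lemma sumK :
    ∑ i : Fin p, ∑ j : Fin q, KK p q i j * KK p q i j =
      rx2 p q * ry2 p q + Dx p q * Dy p q + (2 : ℂ) • (Ex p q * Ey p q)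
        + (q : ℂ) • Ex p q + (p : ℂ) • Ey p q + ((p : ℂ) * (q : ℂ)) • 1 := by
  have keyK : ∀ (i : Fin p) (j : Fin q), KK p q i j * KK p q i j =
      (mulOp (X (Sum.inl i)) * mulOp (X (Sum.inl i))) *
        (mulOp (X (Sum.inr j)) * mulOp (X (Sum.inr j)))
      + (DOp (Sum.inl i) * DOp (Sum.inl i)) * (DOp (Sum.inr j) * DOp (Sum.inr j))
      + (mulOp (X (Sum.inl i)) * DOp (Sum.inl i)) * (mulOp (X (Sum.inr j)) * DOp (Sum.inr j))
      + (mulOp (X (Sum.inl i)) * DOp (Sum.inl i)) * (mulOp (X (Sum.inr j)) * DOp (Sum.inr j))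
      + mulOp (X (Sum.inl i)) * DOp (Sum.inl i)
      + mulOp (X (Sum.inr j)) * DOp (Sum.inr j) + 1 := by
    intro i j
    set A := mulOp (X (Sum.inl i) : PolyPQ p q)
    set B := mulOp (X (Sum.inr j) : PolyPQ p q)
    set P := DOp (Sum.inl i : Fin p ⊕ Fin q)
    set Q := DOp (Sum.inr j : Fin p ⊕ Fin q)
    have hBA : B * A = A * B := a_comm _ _
    have hQP : Q * P = P * Q := d_comm _ _
    have hPB : P * B = B * P := cda i j
    have hQA : Q * A = A * Q := cad i j
    have hPA : P * A = A * P + 1 := dxa i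
    have hQB : Q * B = B * Q + 1 := dyb j
    have t1 : (A * B) * (A * B) = (A * A) * (B * B) := by
      calc (A * B) * (A * B) = A * (B * A) * B := by noncomm_ring
        _ = A * (A * B) * B := by rw [hBA]
        _ = (A * A) * (B * B) := by noncomm_ring
    have t2 : (A * B) * (P * Q) = (A * P) * (B * Q) := by
      calc (A * B) * (P * Q) = A * (B * P) * Q := by noncomm_ring
        _ = A * (P * B) * Q := by rw [hPB]
        _ = (A * P) * (B * Q) := by noncomm_ring
    have t3 : (P * Q) * (A * B) = (A * P) * (B * Q) + A * P + B * Q + 1 := by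
      calc (P * Q) * (A * B) = P * (Q * A) * B := by noncomm_ring
        _ = P * (A * Q) * B := by rw [hQA]
        _ = (P * A) * (Q * B) := by noncomm_ring
        _ = (A * P + 1) * (B * Q + 1) := by rw [hPA, hQB]
        _ = (A * P) * (B * Q) + A * P + B * Q + 1 := by noncomm_ring
    have t4 : (P * Q) * (P * Q) = (P * P) * (Q * Q) := by
      calc (P * Q) * (P * Q) = P * (Q * P) * Q := by noncomm_ring
        _ = P * (P * Q) * Q := by rw [hQP]
        _ = (P * P) * (Q * Q) := by noncomm_ring
    calc KK p q i j * KK p q i j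
        = (A * B) * (A * B) + (A * B) * (P * Q) + (P * Q) * (A * B) + (P * Q) * (P * Q) := by
          rw [KK]; noncomm_ring
      _ = _ := by rw [t1, t2, t3, t4]; noncomm_ring
  simp only [keyK, Finset.sum_add_distrib, Finset.sum_const, Finset.card_univ,
    Fintype.card_fin]
  rw [rx2_eq, ry2_eq, RR, RR, Dx, Dy, Ex, Ey, Finset.sum_mul_sum, Finset.sum_mul_sum,
    Finset.sum_mul_sum]
  have c1 : ∑ i : Fin p, q • (mulOp (X (Sum.inl i)) * DOp (Sum.inl i : Fin p ⊕ Fin q)) =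
      (q : ℂ) • ∑ i : Fin p, mulOp (X (Sum.inl i)) * DOp (Sum.inl i : Fin p ⊕ Fin q) := by
    rw [← Finset.smul_sum, Nat.cast_smul_eq_nsmul]
  have c2 : p • q • (1 : Module.End ℂ (PolyPQ p q)) = ((p : ℂ) * (q : ℂ)) • 1 := by
    rw [← Nat.cast_smul_eq_nsmul ℂ q (1 : Module.End ℂ (PolyPQ p q)),
      ← Nat.cast_smul_eq_nsmul ℂ p, smul_smul]
  have c3 : p • (∑ x : Fin q, mulOp (X (Sum.inr x)) * DOp (Sum.inr x : Fin p ⊕ Fin q)) =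
      (p : ℂ) • ∑ x : Fin q, mulOp (X (Sum.inr x)) * DOp (Sum.inr x : Fin p ⊕ Fin q) := by
    rw [Nat.cast_smul_eq_nsmul]
  rw [c1, c2, c3]
  module

lemma coe_el (a : Fin p) :
    ((finSumFinEquiv (Sum.inl a) : Fin (p + q)) : ℕ) = (a : ℕ) := by
  simp [finSumFinEquiv_apply_left]

lemma coe_er (b : Fin q) :
    ((finSumFinEquiv (Sum.inr b) : Fin (p + q)) : ℕ) = p + (b : ℕ) := by
  simp [finSumFinEquiv_apply_right]

lemma idx_l (a : Fin p) : idx p q (finSumFinEquiv (Sum.inl a)) = Sum.inl a := by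
  have h : ((finSumFinEquiv (Sum.inl a) : Fin (p + q)) : ℕ) < p := by
    rw [coe_el]; exact a.isLt
  rw [idx, dif_pos h]
  simp only [Sum.inl.injEq]
  refine Fin.ext ?_
  simp [coe_el]

lemma idx_r (b : Fin q) : idx p q (finSumFinEquiv (Sum.inr b)) = Sum.inr b := by
  have h : ¬ ((finSumFinEquiv (Sum.inr b) : Fin (p + q)) : ℕ) < p := by
    rw [coe_er]; omega
  rw [idx, dif_neg h]
  simp only [Sum.inr.injEq]
  refine Fin.ext ?_
  simp [coe_er]

lemma piGen_ll (a b : Fin p) :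
    piGen p q (finSumFinEquiv (Sum.inl a)) (finSumFinEquiv (Sum.inl b)) =
      mulOp (X (Sum.inl a)) * DOp (Sum.inl b) - mulOp (X (Sum.inl b)) * DOp (Sum.inl a) := by
  have ha : ((finSumFinEquiv (Sum.inl a) : Fin (p + q)) : ℕ) < p := by
    rw [coe_el]; exact a.isLt
  have hb : ((finSumFinEquiv (Sum.inl b) : Fin (p + q)) : ℕ) < p := by
    rw [coe_el]; exact b.isLt
  rw [piGen, if_pos ha, if_pos hb, idx_l, idx_l]

lemma piGen_lr (a : Fin p) (b : Fin q) :
    piGen p q (finSumFinEquiv (Sum.inl a)) (finSumFinEquiv (Sum.inr b)) =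
      -Complex.I • KK p q a b := by
  have ha : ((finSumFinEquiv (Sum.inl a) : Fin (p + q)) : ℕ) < p := by
    rw [coe_el]; exact a.isLt
  have hb : ¬ ((finSumFinEquiv (Sum.inr b) : Fin (p + q)) : ℕ) < p := by
    rw [coe_er]; omega
  rw [piGen, if_pos ha, if_neg hb, idx_l, idx_r, KK]

lemma piGen_rr (a b : Fin q) :
    piGen p q (finSumFinEquiv (Sum.inr a)) (finSumFinEquiv (Sum.inr b)) =
      mulOp (X (Sum.inr b)) * DOp (Sum.inr a) - mulOp (X (Sum.inr a)) * DOp (Sum.inr b) := by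
  have ha : ¬ ((finSumFinEquiv (Sum.inr a) : Fin (p + q)) : ℕ) < p := by
    rw [coe_er]; omega
  have hb : ¬ ((finSumFinEquiv (Sum.inr b) : Fin (p + q)) : ℕ) < p := by
    rw [coe_er]; omega
  rw [piGen, if_neg ha, if_neg hb, idx_r, idx_r]

lemma piVee_ll (a b : Fin p) :
    piVee p q (finSumFinEquiv (Sum.inl a)) (finSumFinEquiv (Sum.inl b)) =
      -piGen p q (finSumFinEquiv (Sum.inl a)) (finSumFinEquiv (Sum.inl b)) := by
  rw [piVee, if_pos]
  exact Or.inl ⟨by rw [coe_el]; exact a.isLt, by rw [coe_el]; exact b.isLt⟩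

lemma piVee_rr (a b : Fin q) :
    piVee p q (finSumFinEquiv (Sum.inr a)) (finSumFinEquiv (Sum.inr b)) =
      -piGen p q (finSumFinEquiv (Sum.inr a)) (finSumFinEquiv (Sum.inr b)) := by
  rw [piVee, if_pos]
  exact Or.inr ⟨by rw [coe_er]; omega, by rw [coe_er]; omega⟩

lemma piVee_lr (a : Fin p) (b : Fin q) :
    piVee p q (finSumFinEquiv (Sum.inl a)) (finSumFinEquiv (Sum.inr b)) =
      piGen p q (finSumFinEquiv (Sum.inl a)) (finSumFinEquiv (Sum.inr b)) := by
  rw [piVee, if_neg]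
  rw [coe_el, coe_er]
  have := a.isLt
  omega

lemma lt_ll (a b : Fin p) :
    finSumFinEquiv (Sum.inl a) < (finSumFinEquiv (Sum.inl b) : Fin (p + q)) ↔ a < b := by
  rw [Fin.lt_def, Fin.lt_def, coe_el, coe_el]

lemma lt_lr (a : Fin p) (b : Fin q) :
    finSumFinEquiv (Sum.inl a) < (finSumFinEquiv (Sum.inr b) : Fin (p + q)) := by
  rw [Fin.lt_def, coe_el, coe_er]
  have := a.isLt
  omega

lemma not_lt_rl (a : Fin q) (b : Fin p) :
    ¬ finSumFinEquiv (Sum.inr a) < (finSumFinEquiv (Sum.inl b) : Fin (p + q)) := by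
  rw [Fin.lt_def, coe_er, coe_el]
  have := b.isLt
  omega

lemma lt_rr (a b : Fin q) :
    finSumFinEquiv (Sum.inr a) < (finSumFinEquiv (Sum.inr b) : Fin (p + q)) ↔ a < b := by
  rw [Fin.lt_def, Fin.lt_def, coe_er, coe_er]
  omega


/-- The Casimir Ω_g = Σ_{i<j} X_{i,j} X_{i,j}^∨ acts under π as the stated operator. -/
theorem casimir_g_action (p q : ℕ) :
    (∑ i : Fin (p + q), ∑ j : Fin (p + q),
        if i < j then piGen p q i j * piVee p q i j else 0) =
      (Ex p q - Ey p q) * (Ex p q - Ey p q) + ((p : ℂ) - (q : ℂ)) • (Ex p q - Ey p q) -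
        (2 : ℂ) • (Ex p q + Ey p q) -
        (rx2 p q * ry2 p q + rx2 p q * Dx p q + ry2 p q * Dy p q + Dx p q * Dy p q) -
        ((p : ℂ) * (q : ℂ)) • 1 := by
  have step1 : (∑ i : Fin (p + q), ∑ j : Fin (p + q),
      if i < j then piGen p q i j * piVee p q i j else 0) =
      ∑ s : Fin p ⊕ Fin q, ∑ t : Fin p ⊕ Fin q,
        (if finSumFinEquiv s < finSumFinEquiv t then
          piGen p q (finSumFinEquiv s) (finSumFinEquiv t) *
            piVee p q (finSumFinEquiv s) (finSumFinEquiv t) else 0) := by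
    calc (∑ i : Fin (p + q), ∑ j : Fin (p + q),
        if i < j then piGen p q i j * piVee p q i j else 0)
        = ∑ i : Fin (p + q), ∑ t : Fin p ⊕ Fin q,
          (if i < finSumFinEquiv t then
            piGen p q i (finSumFinEquiv t) * piVee p q i (finSumFinEquiv t) else 0) := by
          exact Finset.sum_congr rfl fun i _ =>
            (Equiv.sum_comp finSumFinEquiv fun j =>
              if i < j then piGen p q i j * piVee p q i j else 0).symm
      _ = _ := (Equiv.sum_comp finSumFinEquiv _).symm
  rw [step1]
  rw [Fintype.sum_sum_type]
  simp only [Fintype.sum_sum_type]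
  have h_ll : ∀ a b : Fin p,
      (if finSumFinEquiv (Sum.inl a) < (finSumFinEquiv (Sum.inl b) : Fin (p + q)) then
        piGen p q (finSumFinEquiv (Sum.inl a)) (finSumFinEquiv (Sum.inl b)) *
          piVee p q (finSumFinEquiv (Sum.inl a)) (finSumFinEquiv (Sum.inl b)) else 0) =
      -(if a < b then LL p (Sum.inl : Fin p → Fin p ⊕ Fin q) a b *
          LL p (Sum.inl : Fin p → Fin p ⊕ Fin q) a b else 0) := by
    intro a b
    by_cases h : a < b
    · rw [if_pos ((lt_ll a b).2 h), if_pos h, piVee_ll, piGen_ll, LL,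
        mul_neg (α := Module.End ℂ (PolyPQ p q))]
    · rw [if_neg (fun hc => h ((lt_ll a b).1 hc)), if_neg h, neg_zero]
  have h_rr : ∀ a b : Fin q,
      (if finSumFinEquiv (Sum.inr a) < (finSumFinEquiv (Sum.inr b) : Fin (p + q)) then
        piGen p q (finSumFinEquiv (Sum.inr a)) (finSumFinEquiv (Sum.inr b)) *
          piVee p q (finSumFinEquiv (Sum.inr a)) (finSumFinEquiv (Sum.inr b)) else 0) =
      -(if a < b then LL q (Sum.inr : Fin q → Fin p ⊕ Fin q) a b *
          LL q (Sum.inr : Fin q → Fin p ⊕ Fin q) a b else 0) := by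
    intro a b
    by_cases h : a < b
    · rw [if_pos ((lt_rr a b).2 h), if_pos h, piVee_rr, piGen_rr, LL,
        mul_neg (α := Module.End ℂ (PolyPQ p q))]
      rw [neg_inj]
      have : mulOp (X (Sum.inr b)) * DOp (Sum.inr a) -
          mulOp (X (Sum.inr a)) * DOp (Sum.inr b : Fin p ⊕ Fin q) =
          -(mulOp (X (Sum.inr a)) * DOp (Sum.inr b) -
            mulOp (X (Sum.inr b)) * DOp (Sum.inr a : Fin p ⊕ Fin q)) := by abel
      rw [this]
      exact neg_mul_neg (α := Module.End ℂ (PolyPQ p q)) _ _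
    · rw [if_neg (fun hc => h ((lt_rr a b).1 hc)), if_neg h, neg_zero]
  have h_lr : ∀ (a : Fin p) (b : Fin q),
      (if finSumFinEquiv (Sum.inl a) < (finSumFinEquiv (Sum.inr b) : Fin (p + q)) then
        piGen p q (finSumFinEquiv (Sum.inl a)) (finSumFinEquiv (Sum.inr b)) *
          piVee p q (finSumFinEquiv (Sum.inl a)) (finSumFinEquiv (Sum.inr b)) else 0) =
      -(KK p q a b * KK p q a b) := by
    intro a b
    rw [if_pos (lt_lr a b), piVee_lr, piGen_lr, smul_mul_assoc, mul_smul_comm, smul_smul]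
    have : (-Complex.I) * (-Complex.I) = -1 := by
      rw [neg_mul_neg, Complex.I_mul_I]
    rw [this, neg_one_smul]
  have h_rl : ∀ (a : Fin q) (b : Fin p),
      (if finSumFinEquiv (Sum.inr a) < (finSumFinEquiv (Sum.inl b) : Fin (p + q)) then
        piGen p q (finSumFinEquiv (Sum.inr a)) (finSumFinEquiv (Sum.inl b)) *
          piVee p q (finSumFinEquiv (Sum.inr a)) (finSumFinEquiv (Sum.inl b)) else 0) = 0 :=
    fun a b => by rw [if_neg (not_lt_rl a b)]
  simp only [h_ll, h_rr, h_lr, h_rl, Finset.sum_neg_distrib, Finset.sum_const_zero,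
    add_zero, zero_add, Finset.sum_add_distrib]
  rw [sumLT p (Sum.inl : Fin p → Fin p ⊕ Fin q) Sum.inl_injective,
    sumLT q (Sum.inr : Fin q → Fin p ⊕ Fin q) Sum.inr_injective, sumK,
    ← rx2_eq, ← ry2_eq, ← Ex_eq, ← Ey_eq, ← Dx_eq, ← Dy_eq]
  rw [sub_mul, mul_sub, mul_sub, ← ExEy_comm]
  module
end
end
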